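/- Let C₁,…,C_k be k vertex-disjoint cycles of a graph G chosen so that the total number of vertices ∪V(C_i) is minimal among all collections of k disjoint cycles. Then for any vertex x outside all the cycles and any index i, the number of edges from x to C_i is at most 3; moreover if x has exactly 3 neighbors on C_i then |C_i| = 3, and if x has exactly 2 neighbors on C_i then |C_i| ≤ 4. -/

import Mathlib

/-- A family of `k` pairwise vertex-disjoint cycles in `G`. -/
def CycleFamily {V : Type*} (G : SimpleGraph V) (k : ℕ)
    (f : Fin k → Σ v : V, G.Walk v v) : Prop :=
  (∀ i, (f i).2.IsCycle) ∧
  ∀ i j, i ≠ j → ∀ v : V, v ∈ (f i).2.support → v ∉ (f j).2.support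

/-- The total number of vertices covered by a family of cycles. -/
def famCard {V : Type*} [DecidableEq V] {G : SimpleGraph V} {k : ℕ}
    (f : Fin k → Σ v : V, G.Walk v v) : ℕ :=
  (Finset.univ.biUnion fun i : Fin k => (f i).2.support.toFinset).card

section AuxLemmas
open SimpleGraph Walk

variable {V : Type*} {G : SimpleGraph V}

open SimpleGraph Walk

variable {V : Type*} {G : SimpleGraph V}

/-- The end of a non-nil walk is in the tail of its support. -/
lemma aux_end_mem_support_tail {v w : V} (p : G.Walk v w) (hp : ¬ p.Nil) :
    w ∈ p.support.tail := by
  cases p with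
  | nil => exact absurd Walk.nil_nil hp
  | cons h q => simpa using q.end_mem_support

/-- For a non-nil closed walk, membership in the support equals membership in its tail. -/
lemma aux_mem_support_tail_iff {v : V} (c : G.Walk v v) (hc : ¬ c.Nil) (y : V) :
    y ∈ c.support ↔ y ∈ c.support.tail := by
  constructor
  · intro hy
    rw [c.support_eq_cons] at hy
    rcases List.mem_cons.1 hy with rfl | hy
    · exact aux_end_mem_support_tail c hc
    · exact hy
  · exact List.mem_of_mem_tail

/-- The support of `takeUntil` is a prefix of the support. -/
lemma aux_support_takeUntil_prefix [DecidableEq V] {v w u : V} (p : G.Walk v w)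
    (h : u ∈ p.support) : (p.takeUntil u h).support <+: p.support :=
  ⟨(p.dropUntil u h).support.tail, by rw [← support_append, take_spec]⟩

lemma aux_support_tail_split [DecidableEq V] {v w u : V} (p : G.Walk v w)
    (h : u ∈ p.support) :
    p.support.tail = (p.takeUntil u h).support.tail ++ (p.dropUntil u h).support.tail := by
  conv_lhs => rw [← take_spec p h]
  rw [tail_support_append]

lemma aux_takeUntil_isPath [DecidableEq V] {u w : V} {c : G.Walk u u} (hc : c.IsCycle)
    (hw : w ∈ c.support) (hne : w ≠ u) : (c.takeUntil w hw).IsPath := by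
  have hsplit := aux_support_tail_split c hw
  have hnd : c.support.tail.Nodup := hc.support_nodup
  rw [hsplit, List.nodup_append] at hnd
  have hu : u ∈ (c.dropUntil w hw).support.tail :=
    aux_end_mem_support_tail _ (Walk.not_nil_of_ne hne)
  refine ⟨hc.isTrail.takeUntil hw, ?_⟩
  rw [(c.takeUntil w hw).support_eq_cons, List.nodup_cons]
  exact ⟨fun hmem => hnd.2.2 u hmem u hu rfl, hnd.1⟩

lemma aux_dropUntil_isPath [DecidableEq V] {u w : V} {c : G.Walk u u} (hc : c.IsCycle)
    (hw : w ∈ c.support) (hne : w ≠ u) : (c.dropUntil w hw).IsPath := by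
  have hsplit := aux_support_tail_split c hw
  have hnd : c.support.tail.Nodup := hc.support_nodup
  rw [hsplit, List.nodup_append] at hnd
  have hwmem : w ∈ (c.takeUntil w hw).support.tail :=
    aux_end_mem_support_tail _ (Walk.not_nil_of_ne (Ne.symm hne))
  refine ⟨hc.isTrail.dropUntil hw, ?_⟩
  rw [(c.dropUntil w hw).support_eq_cons, List.nodup_cons]
  exact ⟨fun hmem => hnd.2.2 w hwmem w hmem rfl, hnd.2.1⟩

lemma aux_getVert_takeUntil [DecidableEq V] {v w u : V} (p : G.Walk v w)
    (h : u ∈ p.support) {i : ℕ} (hi : i ≤ (p.takeUntil u h).length) :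
    (p.takeUntil u h).getVert i = p.getVert i := by
  conv_rhs => rw [← take_spec p h]
  rw [getVert_append]
  rcases lt_or_eq_of_le hi with h' | h'
  · rw [if_pos h']
  · rw [h', if_neg (lt_irrefl _), Nat.sub_self, getVert_zero, getVert_length]

lemma aux_length_take_add_drop [DecidableEq V] {v w u : V} (p : G.Walk v w)
    (h : u ∈ p.support) :
    (p.takeUntil u h).length + (p.dropUntil u h).length = p.length := by
  have := congrArg Walk.length (take_spec p h)
  rwa [length_append] at this

lemma aux_length_rotate [DecidableEq V] {v u : V} (c : G.Walk v v) (h : u ∈ c.support) :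
    (c.rotate u h).length = c.length := by
  rw [Walk.rotate, length_append, Nat.add_comm, aux_length_take_add_drop]

/-- The number of vertices of a cycle equals its length. -/
lemma aux_card_support_cycle [DecidableEq V] {v : V} {c : G.Walk v v} (hc : c.IsCycle) :
    c.support.toFinset.card = c.length := by
  have h1 : c.support.toFinset = c.support.tail.toFinset := by
    conv_lhs => rw [c.support_eq_cons]
    rw [List.toFinset_cons, Finset.insert_eq_self]
    exact List.mem_toFinset.2 (aux_end_mem_support_tail c hc.not_nil)
  rw [h1, List.toFinset_card_of_nodup hc.support_nodup]
  have := c.length_support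
  have h2 : c.support.tail.length = c.support.length - 1 := by simp
  omega

lemma aux_card_support_path [DecidableEq V] {v w : V} {p : G.Walk v w} (hp : p.IsPath) :
    p.support.toFinset.card = p.length + 1 := by
  rw [List.toFinset_card_of_nodup hp.support_nodup, length_support]

lemma famCard_eq_sum {V : Type*} [DecidableEq V] {G : SimpleGraph V} {k : ℕ}
    {f : Fin k → Σ v : V, G.Walk v v} (hf : CycleFamily G k f) :
    famCard f = ∑ j : Fin k, (f j).2.support.toFinset.card := by
  refine Finset.card_biUnion ?_
  intro j _ l _ hjl
  rw [Function.onFun, Finset.disjoint_left]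
  intro y hy hy'
  exact hf.2 j l hjl y (List.mem_toFinset.1 hy) (List.mem_toFinset.1 hy')

/-- Key exchange lemma: a path between two neighbors of `x` inside `Cᵢ` cannot be
too short, else we could replace `Cᵢ` by a shorter cycle through `x`. -/
lemma key_lemma {V : Type*} [DecidableEq V] {G : SimpleGraph V} {k : ℕ}
    {f : Fin k → Σ v : V, G.Walk v v} (hf : CycleFamily G k f)
    (hmin : ∀ g : Fin k → Σ v : V, G.Walk v v, CycleFamily G k g → famCard f ≤ famCard g)
    {x : V} (hx : ∀ i, x ∉ (f i).2.support) (i : Fin k)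
    {u w : V} (hxu : G.Adj x u) (hxw : G.Adj x w) (huw : u ≠ w)
    (a : G.Walk u w) (ha : a.IsPath) (hsub : ∀ y ∈ a.support, y ∈ (f i).2.support) :
    (f i).2.length ≤ a.length + 2 := by
  by_contra hlen
  push_neg at hlen
  have hxa : x ∉ a.support := fun h => hx i (hsub x h)
  set P : G.Walk u x := a.append (Walk.cons hxw.symm Walk.nil) with hPdef
  have hPsupp : P.support = a.support ++ [x] := by
    rw [hPdef, support_append]; rfl
  have hPedges : P.edges = a.edges ++ [s(w, x)] := by
    rw [hPdef, edges_append]; rfl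
  have hP : P.IsPath := by
    constructor
    · rw [isTrail_def, hPedges, List.nodup_append]
      refine ⟨ha.isTrail.edges_nodup, List.nodup_singleton _, ?_⟩
      intro e he _ he' hee
      rw [List.mem_singleton] at he'
      subst he' hee
      exact hxa (a.snd_mem_support_of_mem_edges he)
    · rw [hPsupp, List.nodup_append]
      exact ⟨ha.support_nodup, List.nodup_singleton _,
        fun y hy _ hy' hyy => by rw [List.mem_singleton] at hy'; subst hy'; exact hxa (hyy ▸ hy)⟩
  have hnotedge : s(x, u) ∉ P.edges := by
    rw [hPedges, List.mem_append]
    rintro (he | he)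
    · exact hxa (a.fst_mem_support_of_mem_edges he)
    · rw [List.mem_singleton, Sym2.eq_iff] at he
      rcases he with ⟨h1, h2⟩ | ⟨h1, h2⟩
      · exact G.ne_of_adj hxw h1
      · exact huw h2
  have hD : (Walk.cons hxu P).IsCycle := (Walk.cons_isCycle_iff P hxu).2 ⟨hP, hnotedge⟩
  set D := Walk.cons hxu P with hDdef
  have hDsupp : ∀ y, y ∈ D.support ↔ y = x ∨ y ∈ a.support := by
    intro y
    rw [hDdef, support_cons, List.mem_cons, hPsupp, List.mem_append, List.mem_singleton]
    tauto
  set g := Function.update f i ⟨x, D⟩ with hgdef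
  have hgj : ∀ j, j ≠ i → g j = f j := fun j hj => Function.update_of_ne hj _ _
  have hgi : g i = ⟨x, D⟩ := Function.update_self _ _ _
  have hgisupp : (g i).2.support = D.support :=
    congrArg (fun s : (Σ v : V, G.Walk v v) => s.2.support) hgi
  have hCF : CycleFamily G k g := by
    constructor
    · intro j
      by_cases hj : j = i
      · rw [hj]
        exact hgi ▸ hD
      · rw [hgj j hj]; exact hf.1 j
    · intro j l hjl y hy hy'
      have hmemD : ∀ m, m ≠ i → y ∈ D.support → y ∈ (f m).2.support → False := by
        intro m hm hyD hym
        rcases (hDsupp y).1 hyD with rfl | hmem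
        · exact hx m hym
        · exact hf.2 i m (fun h => hm h.symm) y (hsub y hmem) hym
      by_cases hj : j = i
      · have hl : l ≠ i := fun h => hjl (by rw [hj, h])
        rw [hj, hgisupp] at hy
        rw [hgj l hl] at hy'
        exact hmemD l hl hy hy'
      · rw [hgj j hj] at hy
        by_cases hl : l = i
        · rw [hl, hgisupp] at hy'
          exact hmemD j hj hy' hy
        · rw [hgj l hl] at hy'
          exact hf.2 j l hjl y hy hy'
  have hDfin : D.support.toFinset = insert x a.support.toFinset := by
    ext y
    simp only [List.mem_toFinset, Finset.mem_insert, hDsupp]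
  have hDcard : D.support.toFinset.card = a.length + 2 := by
    rw [hDfin, Finset.card_insert_of_notMem (fun h => hxa (List.mem_toFinset.1 h)),
      aux_card_support_path ha]
  have hgicard : (g i).2.support.toFinset.card = a.length + 2 := by
    rw [congrArg (fun s : (Σ v : V, G.Walk v v) => s.2.support.toFinset.card) hgi]
    exact hDcard
  have hlt : famCard g < famCard f := by
    rw [famCard_eq_sum hf, famCard_eq_sum hCF]
    apply Finset.sum_lt_sum
    · intro j _
      by_cases hj : j = i
      · rw [hj]
        have h2 := aux_card_support_cycle (hf.1 i)
        omega
      · rw [hgj j hj]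
    · refine ⟨i, Finset.mem_univ i, ?_⟩
      have h2 := aux_card_support_cycle (hf.1 i)
      omega
  exact absurd (hmin g hCF) (not_le.2 hlt)

/-- From two neighbours of `x` on the same minimal-family cycle we get that the cycle
has length at most 4, and if exactly 4 the second neighbour sits exactly
2 steps along the rotated cycle. -/
lemma two_le_arc {V : Type*} [DecidableEq V] {G : SimpleGraph V} {k : ℕ}
    {f : Fin k → Σ v : V, G.Walk v v} (hf : CycleFamily G k f)
    (hmin : ∀ g : Fin k → Σ v : V, G.Walk v v, CycleFamily G k g → famCard f ≤ famCard g)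
    {x : V} (hx : ∀ i, x ∉ (f i).2.support) (i : Fin k)
    {u w : V} (hxu : G.Adj x u) (hxw : G.Adj x w) (hne : u ≠ w)
    (hus : u ∈ (f i).2.support) (hws : w ∈ (f i).2.support) :
    (f i).2.length ≤ 4 ∧
      ((f i).2.length = 4 → w = (((f i).2.rotate u hus)).getVert 2) := by
  have hc : (f i).2.IsCycle := hf.1 i
  set C := (f i).2 with hCdef
  set c' := C.rotate u hus with hc'def
  have hc' : c'.IsCycle := hc.rotate hus
  have hlenrot : c'.length = C.length := aux_length_rotate C hus
  have hwt : w ∈ C.support.tail := (aux_mem_support_tail_iff C hc.not_nil w).1 hws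
  have hw' : w ∈ c'.support := by
    apply List.mem_of_mem_tail
    exact ((support_rotate C u hus).perm.mem_iff).2 hwt
  have hsubc : ∀ y ∈ c'.support, y ∈ C.support := by
    intro y hy
    apply List.mem_of_mem_tail
    exact ((support_rotate C u hus).perm.mem_iff).1
      ((aux_mem_support_tail_iff c' hc'.not_nil y).1 hy)
  set t := c'.takeUntil w hw' with htdef
  set d := c'.dropUntil w hw' with hddef
  have ht : t.IsPath := aux_takeUntil_isPath hc' hw' (Ne.symm hne)
  have hd : d.IsPath := aux_dropUntil_isPath hc' hw' (Ne.symm hne)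
  have hsum : t.length + d.length = C.length := by
    rw [← hlenrot]; exact aux_length_take_add_drop c' hw'
  have k1 : C.length ≤ t.length + 2 :=
    key_lemma hf hmin hx i hxu hxw hne t ht
      (fun y hy => hsubc y (support_takeUntil_subset c' hw' hy))
  have k2 : C.length ≤ d.length + 2 :=
    key_lemma hf hmin hx i hxw hxu (Ne.symm hne) d hd
      (fun y hy => hsubc y (support_dropUntil_subset c' hw' hy))
  have hCl : C.length = (f i).2.length := rfl
  refine ⟨by omega, fun h4 => ?_⟩
  have htl : t.length = 2 := by omega
  have hgv := aux_getVert_takeUntil c' hw' (le_of_eq (rfl : t.length = t.length))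
  rw [getVert_length] at hgv
  rw [htl] at hgv
  exact hgv


end AuxLemmas

/-- Lemma 1 (Fujita et al.): if `{C₁, …, C_k}` is a minimal family of `k` disjoint
cycles, then every outside vertex `x` sends at most 3 edges to each `Cᵢ`; 3 edges force
`|Cᵢ| = 3`, and 2 edges force `|Cᵢ| ≤ 4`. -/
theorem minimal_family_edges {V : Type*} [DecidableEq V] (G : SimpleGraph V)
    [DecidableRel G.Adj] (k : ℕ) (f : Fin k → Σ v : V, G.Walk v v)
    (hf : CycleFamily G k f)
    (hmin : ∀ g : Fin k → Σ v : V, G.Walk v v, CycleFamily G k g → famCard f ≤ famCard g)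
    (x : V) (hx : ∀ i, x ∉ (f i).2.support) (i : Fin k) :
    ((f i).2.support.toFinset.filter (G.Adj x)).card ≤ 3 ∧
    (((f i).2.support.toFinset.filter (G.Adj x)).card = 3 → (f i).2.length = 3) ∧
    (((f i).2.support.toFinset.filter (G.Adj x)).card = 2 → (f i).2.length ≤ 4) := by

  have hc : (f i).2.IsCycle := hf.1 i
  have hn3 : 3 ≤ (f i).2.length := hc.three_le_length
  set C := (f i).2 with hCdef
  set N := C.support.toFinset.filter (G.Adj x) with hNdef
  have hmemN : ∀ y ∈ N, y ∈ C.support ∧ G.Adj x y := by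
    intro y hy
    rw [hNdef, Finset.mem_filter, List.mem_toFinset] at hy
    exact hy
  by_cases h2 : 2 ≤ N.card
  · obtain ⟨u, hu, w, hw, huw⟩ := Finset.one_lt_card.1 h2
    obtain ⟨hus, hxu⟩ := hmemN u hu
    obtain ⟨hws, hxw⟩ := hmemN w hw
    have h4 : C.length ≤ 4 := (two_le_arc hf hmin hx i hxu hxw huw hus hws).1
    have hdn : N.card ≤ C.length := by
      calc N.card ≤ C.support.toFinset.card := Finset.card_filter_le _ _
        _ = C.length := aux_card_support_cycle hc
    have hnot34 : C.length = 4 → N.card ≤ 2 := by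
      intro h4'
      by_contra h3
      push_neg at h3
      obtain ⟨a, b, c, ha, hb, hcc, hab, hac, hbc⟩ := Finset.two_lt_card_iff.1 h3
      obtain ⟨has, hxa⟩ := hmemN a ha
      obtain ⟨hbs, hxb⟩ := hmemN b hb
      obtain ⟨hcs, hxc⟩ := hmemN c hcc
      have e1 := (two_le_arc hf hmin hx i hxa hxb hab has hbs).2 h4'
      have e2 := (two_le_arc hf hmin hx i hxa hxc hac has hcs).2 h4'
      exact hbc (e1.trans e2.symm)
    refine ⟨?_, ?_, fun _ => h4⟩
    · have : C.length = 3 ∨ C.length = 4 := by omega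
      rcases this with h | h
      · omega
      · have := hnot34 h; omega
    · intro h3
      have : C.length = 3 ∨ C.length = 4 := by omega
      rcases this with h | h
      · exact h
      · have := hnot34 h; omega
  · push_neg at h2
    exact ⟨by omega, by omega, by omega⟩
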